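/- Let A be a commutative semiring with idempotent addition (a + a = a for all a : A) which is multiplicatively cancellative by nonzero elements (for all x y z : A with z ≠ 0, x * z = y * z implies x = y). Then for all x y : A and every n : ℕ, one has (x + y)^n = x^n + y^n. -/

import Mathlib

theorem freshman_dream_char_one {A : Type*} [CommSemiring A]
    (hidem : ∀ a : A, a + a = a)
    (hcancel : ∀ x y z : A, z ≠ 0 → x * z = y * z → x = y) :
    ∀ (x y : A) (n : ℕ), (x + y) ^ n = x ^ n + y ^ n := by
  -- cast of positive naturals is 1
  have cast1 : ∀ m : ℕ, ((m + 1 : ℕ) : A) = 1 := by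
    intro m
    induction m with
    | zero => simp
    | succ k ih =>
      push_cast
      push_cast at ih
      rw [ih, hidem 1]
  -- binomial with all coefficients 1
  have pow_sum : ∀ (x y : A) (n : ℕ),
      (x + y) ^ n = ∑ k ∈ Finset.range (n + 1), x ^ k * y ^ (n - k) := by
    intro x y n
    rw [add_pow]
    apply Finset.sum_congr rfl
    intro k hk
    have hk' : k ≤ n := Nat.lt_succ_iff.mp (Finset.mem_range.mp hk)
    have hpos : 0 < n.choose k := Nat.choose_pos hk'
    have : n.choose k = (n.choose k - 1) + 1 := by omega
    rw [this, cast1, mul_one]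
  intro x y n
  by_cases h0 : x + y = 0
  · have hx : x = 0 := by
      have h1 : x + (x + y) = x + y := by rw [← add_assoc, hidem]
      rw [h0] at h1
      simpa using h1
    have hy : y = 0 := by
      have h1 : y + (x + y) = x + y := by
        rw [add_comm x y, ← add_assoc, hidem]
      rw [h0] at h1
      simpa using h1
    subst hx; subst hy
    simpa using (hidem ((0 : A) ^ n)).symm
  · -- no zero divisors
    have nzd : ∀ a b : A, a * b = 0 → b ≠ 0 → a = 0 := by
      intro a b h hb
      exact hcancel a 0 b hb (by rw [h, zero_mul])
    have hz : ∀ m : ℕ, (x + y) ^ m ≠ 0 := by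
      intro m
      induction m with
      | zero =>
        intro h
        apply h0
        rw [pow_zero] at h
        rw [← mul_one (x + y), h, mul_zero]
      | succ k ih =>
        intro h
        rw [pow_succ] at h
        exact ih (nzd _ _ h h0)
    apply hcancel _ _ ((x + y) ^ n) (hz n)
    set f : ℕ → A := fun j => x ^ j * y ^ (n + n - j) with hf
    have h1 : ∑ k ∈ Finset.range (n + 1), x ^ n * (x ^ k * y ^ (n - k))
        = ∑ j ∈ Finset.Ico n (n + n + 1), f j := by
      rw [Finset.sum_Ico_eq_sum_range, show n + n + 1 - n = n + 1 from by omega]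
      apply Finset.sum_congr rfl
      intro k hk
      have hk' : k ≤ n := Nat.lt_succ_iff.mp (Finset.mem_range.mp hk)
      have e : n + n - (n + k) = n - k := by omega
      simp only [hf, e, pow_add]
      ring
    have h2 : ∑ k ∈ Finset.range (n + 1), y ^ n * (x ^ k * y ^ (n - k))
        = ∑ j ∈ Finset.range (n + 1), f j := by
      apply Finset.sum_congr rfl
      intro k hk
      have hk' : k ≤ n := Nat.lt_succ_iff.mp (Finset.mem_range.mp hk)
      have e : n + n - k = n + (n - k) := by omega
      simp only [hf, e, pow_add]
      ring
    rw [← pow_add, pow_sum (x := x) (y := y) (n := n + n), pow_sum x y n,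
      add_mul, Finset.mul_sum, Finset.mul_sum, h1, h2]
    have split1 : ∑ j ∈ Finset.range (n + n + 1), f j
        = ∑ j ∈ Finset.range (n + 1), f j + ∑ j ∈ Finset.Ico (n + 1) (n + n + 1), f j := by
      rw [Finset.range_eq_Ico, ← Finset.sum_Ico_consecutive f (by omega : 0 ≤ n + 1) (by omega : n + 1 ≤ n + n + 1), Finset.range_eq_Ico]
    have split2 : ∑ j ∈ Finset.Ico n (n + n + 1), f j
        = f n + ∑ j ∈ Finset.Ico (n + 1) (n + n + 1), f j := by
      rw [Finset.sum_eq_sum_Ico_succ_bot (by omega : n < n + n + 1)]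
    have split3 : ∑ j ∈ Finset.range (n + 1), f j
        = ∑ j ∈ Finset.range n, f j + f n := Finset.sum_range_succ f n
    rw [split1, split2, split3]
    set S := ∑ j ∈ Finset.range n, f j
    set B := ∑ j ∈ Finset.Ico (n + 1) (n + n + 1), f j
    rw [show f n + B + (S + f n) = S + (f n + f n) + B from by ring, hidem]
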